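/- The matrices C = 1+e_{d−1,2}+e_{d,1} and D = (−1)^d(e_{1,2}−e_{2,3}+∑_{i=3}^{d} e_{i,i+1}) (cyclic index convention) generate SL(d,p) for every prime p and every d ≥ 5. -/

import Mathlib

open Matrix
open Fin.NatCast

/-- The matrix `C = 1 + e_{d-1,2} + e_{d,1}` (paper indices `1,…,d` become `0,…,d-1`). -/
def AlbertThompsonC (p d : ℕ) [NeZero d] : Matrix (Fin d) (Fin d) (ZMod p) :=
  1 + single ((d - 2 : ℕ) : Fin d) ((1 : ℕ) : Fin d) 1 +
    single ((d - 1 : ℕ) : Fin d) ((0 : ℕ) : Fin d) 1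

/-- The matrix `D = (-1)^d (e_{1,2} - e_{2,3} + ∑_{i=3}^{d} e_{i,i+1})` with the cyclic
index convention `e_{i,d+j} = e_{i,j}` (realized by addition in `Fin d`). -/
def AlbertThompsonD (p d : ℕ) [NeZero d] : Matrix (Fin d) (Fin d) (ZMod p) :=
  ((-1 : ZMod p) ^ d) •
    (single ((0 : ℕ) : Fin d) ((1 : ℕ) : Fin d) 1 -
      single ((1 : ℕ) : Fin d) ((2 : ℕ) : Fin d) 1 +
      ∑ k ∈ Finset.Icc 2 (d - 1), single ((k : ℕ) : Fin d) (((k : ℕ) : Fin d) + 1) 1)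

namespace AlbertThompsonAux

set_option linter.unusedSectionVars false

/-! ### Generic ring lemmas -/

theorem comm_expand {R : Type*} [Ring R] {N M : R} (hN : N*N = 0) (hM : M*M = 0)
    (hMN : M*N = 0) : (1+N)*(1+M)*(1-N)*(1-M) = 1 + N*M := by
  have e1 : (1+N)*(1+M)*(1-N) = 1 + M + N*M - N*N - M*N - N*(M*N) := by noncomm_ring
  have e2 : ((1 + M + N*M) - 0 - 0 - 0)*(1-M) = 1 + N*M - M*M - N*(M*M) := by noncomm_ring
  rw [e1, hN, hMN, mul_zero, e2, hM, mul_zero, sub_zero, sub_zero]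

theorem one_add_mul_one_sub {R : Type*} [Ring R] {N : R} (hN : N*N = 0) :
    (1+N)*(1-N) = 1 := by
  have : (1+N)*(1-N) = 1 - N*N := by noncomm_ring
  rw [this, hN, sub_zero]

/-! ### Fin cast lemmas -/

theorem castNe {d : ℕ} [NeZero d] {a b : ℕ} (ha : a < d) (hb : b < d) (hab : a ≠ b) :
    ((a : Fin d)) ≠ ((b : Fin d)) := by
  intro h
  apply hab
  have := congrArg Fin.val h
  rwa [Fin.val_natCast, Fin.val_natCast, Nat.mod_eq_of_lt ha, Nat.mod_eq_of_lt hb] at this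

theorem castEq {d : ℕ} [NeZero d] {a b : ℕ} (hab : a % d = b % d) :
    ((a : Fin d)) = ((b : Fin d)) := by
  apply Fin.ext
  rwa [Fin.val_natCast, Fin.val_natCast]

theorem castAdd {d : ℕ} [NeZero d] {x y z : ℕ} (h : (x + y) % d = z % d) :
    ((x : Fin d)) + ((y : Fin d)) = ((z : Fin d)) := by
  rw [← Nat.cast_add]; exact castEq h

theorem cast_eq_iff_val {d : ℕ} [NeZero d] {a : ℕ} (ha : a < d) (i : Fin d) :
    ((a : Fin d)) = i ↔ a = i.val := by
  constructor
  · intro h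
    have := congrArg Fin.val h
    rwa [Fin.val_natCast, Nat.mod_eq_of_lt ha] at this
  · rintro rfl
    exact Fin.cast_val_eq_self i

theorem castNeZero {d : ℕ} [NeZero d] {a : ℕ} (ha : a < d) (h : a ≠ 0) :
    ((a : Fin d)) ≠ 0 := by
  have := castNe (d := d) ha (Nat.pos_of_ne_zero (NeZero.ne d)) h
  simpa using this

variable {p d : ℕ} [Fact p.Prime] [NeZero d]

theorem val_one' (hd : 5 ≤ d) : (1 : Fin d).val = 1 := by
  rw [show (1:Fin d) = ((1:ℕ):Fin d) by norm_cast, Fin.val_natCast]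
  exact Nat.mod_eq_of_lt (by omega)

theorem val_two' (hd : 5 ≤ d) : (2 : Fin d).val = 2 := by
  rw [show (2:Fin d) = ((2:ℕ):Fin d) by norm_cast, Fin.val_natCast]
  exact Nat.mod_eq_of_lt (by omega)

/-! ### The sign function and entrywise description of D -/

def eps (p d : ℕ) [NeZero d] (i : Fin d) : ZMod p := if i = 1 then -1 else 1

theorem eps_sq (i : Fin d) : eps p d i * eps p d i = 1 := by
  unfold eps; split_ifs <;> ring

theorem std_apply (a b i j : Fin d) (c : ZMod p) :
    single a b c i j = if a = i ∧ b = j then c else 0 := rfl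

theorem D_apply (hd : 5 ≤ d) (i j : Fin d) :
    AlbertThompsonD p d i j =
      if j = i + 1 then (-1 : ZMod p) ^ d * eps p d i else 0 := by
  have hd0 : 0 < d := by omega
  unfold AlbertThompsonD
  rw [Matrix.smul_apply, Matrix.add_apply, Matrix.sub_apply, Matrix.sum_apply]
  have hsum : (∑ k ∈ Finset.Icc 2 (d-1),
      single ((k : ℕ) : Fin d) (((k : ℕ) : Fin d) + 1) (1 : ZMod p) i j)
      = if 2 ≤ i.val ∧ j = i + 1 then 1 else 0 := by
    have step : ∀ k ∈ Finset.Icc 2 (d-1),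
        single ((k : ℕ) : Fin d) (((k : ℕ) : Fin d) + 1) (1 : ZMod p) i j
        = if k = i.val then (if j = i + 1 then (1:ZMod p) else 0) else 0 := by
      intro k hk
      simp only [Finset.mem_Icc] at hk
      have hkd : k < d := by omega
      by_cases hki : k = i.val
      · subst hki
        rw [Fin.cast_val_eq_self, if_pos rfl, std_apply]
        by_cases hj : j = i + 1
        · rw [if_pos hj, if_pos ⟨rfl, hj.symm⟩]
        · rw [if_neg hj, if_neg]; rintro ⟨-, h2⟩; exact hj h2.symm
      · rw [if_neg hki, std_apply, if_neg]
        rintro ⟨h1, -⟩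
        exact hki ((cast_eq_iff_val hkd i).mp h1)
    rw [Finset.sum_congr rfl step, Finset.sum_ite_eq' (Finset.Icc 2 (d-1)) i.val]
    by_cases h2i : 2 ≤ i.val
    · have hmem : i.val ∈ Finset.Icc 2 (d-1) := by
        simp only [Finset.mem_Icc]; exact ⟨h2i, by omega⟩
      rw [if_pos hmem]
      by_cases hj : j = i + 1
      · rw [if_pos hj, if_pos ⟨h2i, hj⟩]
      · rw [if_neg hj, if_neg]; rintro ⟨-, h⟩; exact hj h
    · have hmem : i.val ∉ Finset.Icc 2 (d-1) := by simp only [Finset.mem_Icc]; omega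
      rw [if_neg hmem, if_neg]; rintro ⟨h, -⟩; exact h2i h
  rw [hsum]
  have c0 : ((0:ℕ) : Fin d) = (0 : Fin d) := by norm_cast
  have c1 : ((1:ℕ) : Fin d) = (1 : Fin d) := by norm_cast
  have c2 : ((2:ℕ) : Fin d) = (2 : Fin d) := by norm_cast
  rw [c0, c1, c2, std_apply, std_apply]
  have h01 : (0 : Fin d) ≠ 1 := by
    intro h; have := congrArg Fin.val h; rw [Fin.val_zero, val_one' hd] at this; omega
  by_cases hj : j = i + 1
  · subst hj
    by_cases hi0 : i = 0
    · subst hi0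
      rw [if_pos ⟨rfl, (zero_add (1:Fin d)).symm⟩]
      rw [if_neg (by rintro ⟨h, -⟩; exact h01 h.symm)]
      rw [if_neg (by rintro ⟨h, -⟩; simp at h)]
      rw [if_pos rfl]
      have e0 : eps p d (0 : Fin d) = 1 := if_neg h01
      rw [e0]; simp [smul_eq_mul]
    · by_cases hi1 : i = 1
      · subst hi1
        rw [if_neg (by rintro ⟨h, -⟩; exact h01 h)]
        rw [if_pos ⟨rfl, one_add_one_eq_two.symm⟩]
        rw [if_neg (by rintro ⟨h, -⟩; rw [val_one' hd] at h; omega)]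
        rw [if_pos rfl]
        have e1 : eps p d (1 : Fin d) = -1 := if_pos rfl
        rw [e1]; simp [smul_eq_mul]
      · have hv0 : i.val ≠ 0 := fun h => hi0 (Fin.ext (by rw [h, Fin.val_zero]))
        have hv1 : i.val ≠ 1 := fun h => hi1 (Fin.ext (by rw [h, val_one' hd]))
        rw [if_neg (by rintro ⟨h, -⟩; exact hi0 h.symm)]
        rw [if_neg (by rintro ⟨h, -⟩; exact hi1 h.symm)]
        rw [if_pos ⟨by omega, rfl⟩]
        rw [if_pos rfl]
        have ei : eps p d i = 1 := if_neg hi1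
        rw [ei]; simp [smul_eq_mul]
  · rw [if_neg hj]
    rw [if_neg (by rintro ⟨h1, h2⟩; exact hj (by rw [← h2, ← h1, zero_add]))]
    rw [if_neg (by rintro ⟨h1, h2⟩; exact hj (by rw [← h2, ← h1, one_add_one_eq_two]))]
    rw [if_neg (by rintro ⟨-, h⟩; exact hj h)]
    simp

/-! ### Shift identity -/

theorem Eshift_core (hd : 5 ≤ d) (a b : Fin d) (lam : ZMod p) :
    single a b lam * AlbertThompsonD p d
    = AlbertThompsonD p d * single (a+1) (b+1) (eps p d a * eps p d b * lam) := by
  ext i j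
  by_cases hia : i = a
  · subst hia
    rw [Matrix.single_mul_apply_same]
    by_cases hjb : j = b + 1
    · subst hjb
      rw [Matrix.mul_single_apply_same, D_apply hd, D_apply hd,
        if_pos rfl, if_pos rfl]
      rw [show (-1:ZMod p)^d * eps p d i * (eps p d i * eps p d b * lam)
            = (-1:ZMod p)^d * (eps p d i * eps p d i) * (eps p d b * lam) by ring, eps_sq]
      ring
    · rw [Matrix.mul_single_apply_of_ne _ _ _ _ _ hjb, D_apply hd, if_neg hjb,
        mul_zero]
  · rw [Matrix.single_mul_apply_of_ne _ _ _ _ _ hia]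
    by_cases hjb : j = b + 1
    · subst hjb
      rw [Matrix.mul_single_apply_same, D_apply hd, if_neg, zero_mul]
      intro h
      exact hia (add_right_cancel h).symm
    · rw [Matrix.mul_single_apply_of_ne _ _ _ _ _ hjb]

/-! ### Determinants -/

theorem detC (hd : 5 ≤ d) : (AlbertThompsonC p d).det = 1 := by
  have h1 : ((1:ℕ) : Fin d) ≠ ((d-1 : ℕ) : Fin d) := castNe (by omega) (by omega) (by omega)
  have hC : AlbertThompsonC p d
      = transvection ((d-2:ℕ) : Fin d) ((1:ℕ) : Fin d) 1
        * transvection ((d-1:ℕ) : Fin d) ((0:ℕ) : Fin d) 1 := by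
    unfold AlbertThompsonC Matrix.transvection
    have hAB : single ((d-2:ℕ) : Fin d) ((1:ℕ) : Fin d) (1:ZMod p)
        * single ((d-1:ℕ) : Fin d) ((0:ℕ) : Fin d) 1 = 0 :=
      Matrix.single_mul_single_of_ne _ _ _ _ h1 _
    have hexp : (1 + single ((d-2:ℕ) : Fin d) ((1:ℕ) : Fin d) (1:ZMod p))
        * (1 + single ((d-1:ℕ) : Fin d) ((0:ℕ) : Fin d) 1)
        = 1 + single ((d-2:ℕ) : Fin d) ((1:ℕ) : Fin d) 1
          + single ((d-1:ℕ) : Fin d) ((0:ℕ) : Fin d) 1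
          + single ((d-2:ℕ) : Fin d) ((1:ℕ) : Fin d) 1
            * single ((d-1:ℕ) : Fin d) ((0:ℕ) : Fin d) 1 := by noncomm_ring
    rw [hexp, hAB, add_zero]
  rw [hC, det_mul, det_transvection_of_ne _ _ (castNe (by omega) (by omega) (by omega)) 1,
    det_transvection_of_ne _ _ (castNe (by omega) (by omega) (by omega)) 1, one_mul]

theorem detD (hd : 5 ≤ d) : (AlbertThompsonD p d).det = 1 := by
  obtain ⟨m, rfl⟩ : ∃ m, d = m + 1 := ⟨d - 1, by omega⟩
  have hDD : AlbertThompsonD p (m+1)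
      = diagonal (fun i => (-1:ZMod p)^(m+1) * eps p (m+1) i)
        * Equiv.Perm.permMatrix (ZMod p) (finRotate (m+1)) := by
    ext i j
    rw [D_apply hd, Matrix.diagonal_mul]
    unfold Equiv.Perm.permMatrix PEquiv.toMatrix
    simp only [Matrix.of_apply, Equiv.toPEquiv_apply, finRotate_succ_apply, Option.mem_def,
      Option.some.injEq]
    by_cases h : j = i + 1
    · rw [if_pos h, if_pos h.symm, mul_one]
    · rw [if_neg h, if_neg (fun hh => h hh.symm), mul_zero]
  rw [hDD, det_mul, det_diagonal, Matrix.det_permutation, sign_finRotate]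
  have hprod : (∏ i : Fin (m+1), (-1:ZMod p)^(m+1) * eps p (m+1) i)
      = (-1:ZMod p)^((m+1)*(m+1)) * (-1) := by
    rw [Finset.prod_mul_distrib, Finset.prod_const, Finset.card_univ, Fintype.card_fin,
      ← pow_mul]
    congr 1
    show (∏ i : Fin (m+1), eps p (m+1) i) = -1
    unfold eps
    rw [Finset.prod_ite_eq' Finset.univ (1 : Fin (m+1)) (fun _ => (-1 : ZMod p))]
    rw [if_pos (Finset.mem_univ _)]
  rw [hprod]
  have hcast : ((((-1:ℤˣ)^m : ℤˣ) : ℤ) : ZMod p) = ((-1 : ZMod p))^m := by push_cast; ring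
  rw [Nat.add_sub_cancel, hcast]
  rw [show (-1:ZMod p)^((m+1)*(m+1)) * (-1) * (-1)^m
        = (-1:ZMod p)^((m+1)*(m+1) + (m+1)) by ring]
  apply Even.neg_one_pow
  rw [show (m+1)*(m+1) + (m+1) = (m+1)*(m+1+1) by ring]
  exact Nat.even_mul_succ_self (m+1)

/-! ### The special linear group elements and closure subgroup -/

def Cel (p d : ℕ) [Fact p.Prime] [NeZero d] (hd : 5 ≤ d) :
    SpecialLinearGroup (Fin d) (ZMod p) := ⟨AlbertThompsonC p d, detC hd⟩

def Del (p d : ℕ) [Fact p.Prime] [NeZero d] (hd : 5 ≤ d) :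
    SpecialLinearGroup (Fin d) (ZMod p) := ⟨AlbertThompsonD p d, detD hd⟩

def HH (p d : ℕ) [Fact p.Prime] [NeZero d] (hd : 5 ≤ d) :
    Subgroup (SpecialLinearGroup (Fin d) (ZMod p)) :=
  Subgroup.closure {Cel p d hd, Del p d hd}

theorem Cel_mem (hd : 5 ≤ d) : Cel p d hd ∈ HH p d hd :=
  Subgroup.subset_closure (Set.mem_insert _ _)

theorem Del_mem (hd : 5 ≤ d) : Del p d hd ∈ HH p d hd :=
  Subgroup.subset_closure (Set.mem_insert_of_mem _ rfl)

theorem inv_val (T : SpecialLinearGroup (Fin d) (ZMod p)) (N : Matrix (Fin d) (Fin d) (ZMod p))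
    (h : (T : Matrix (Fin d) (Fin d) (ZMod p)) = 1 + N) (hN : N*N = 0) :
    ((T⁻¹ : SpecialLinearGroup (Fin d) (ZMod p)) : Matrix (Fin d) (Fin d) (ZMod p)) = 1 - N := by
  have h2 : (T : Matrix (Fin d) (Fin d) (ZMod p)) * (1 - N) = 1 := by
    rw [h]; exact one_add_mul_one_sub hN
  calc ((T⁻¹ : SpecialLinearGroup (Fin d) (ZMod p)) : Matrix (Fin d) (Fin d) (ZMod p))
      = ((T⁻¹ : SpecialLinearGroup (Fin d) (ZMod p)) : Matrix (Fin d) (Fin d) (ZMod p)) *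
        ((T : Matrix (Fin d) (Fin d) (ZMod p)) * (1 - N)) := by rw [h2, mul_one]
    _ = (((T⁻¹ * T : SpecialLinearGroup (Fin d) (ZMod p))) : Matrix (Fin d) (Fin d) (ZMod p)) *
        (1 - N) := by rw [Matrix.SpecialLinearGroup.coe_mul, mul_assoc]
    _ = 1 - N := by rw [inv_mul_cancel]; simp

theorem comm_mem (hd : 5 ≤ d) {T₁ T₂ : SpecialLinearGroup (Fin d) (ZMod p)}
    (h₁ : T₁ ∈ HH p d hd) (h₂ : T₂ ∈ HH p d hd) {N M : Matrix (Fin d) (Fin d) (ZMod p)}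
    (e₁ : (T₁ : Matrix (Fin d) (Fin d) (ZMod p)) = 1 + N)
    (e₂ : (T₂ : Matrix (Fin d) (Fin d) (ZMod p)) = 1 + M)
    (hN : N*N = 0) (hM : M*M = 0) (hMN : M*N = 0) :
    ∃ T ∈ HH p d hd, (T : Matrix (Fin d) (Fin d) (ZMod p)) = 1 + N*M := by
  refine ⟨T₁*T₂*T₁⁻¹*T₂⁻¹, mul_mem (mul_mem (mul_mem h₁ h₂) (inv_mem h₁)) (inv_mem h₂), ?_⟩
  rw [Matrix.SpecialLinearGroup.coe_mul, Matrix.SpecialLinearGroup.coe_mul,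
    Matrix.SpecialLinearGroup.coe_mul, inv_val T₁ N e₁ hN, inv_val T₂ M e₂ hM, e₁, e₂]
  exact comm_expand hN hM hMN

/-! ### `Full a b`: all transvections at position `(a,b)` lie in the closure -/

def Full (p d : ℕ) [Fact p.Prime] [NeZero d] (hd : 5 ≤ d) (a b : Fin d) : Prop :=
  ∀ lam : ZMod p, ∃ T ∈ HH p d hd,
    (T : Matrix (Fin d) (Fin d) (ZMod p)) = 1 + single a b lam

theorem pow_val (a b : Fin d) (hba : b ≠ a) (T : SpecialLinearGroup (Fin d) (ZMod p))
    (h : (T : Matrix (Fin d) (Fin d) (ZMod p)) = 1 + single a b 1) (n : ℕ) :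
    ((T^n : SpecialLinearGroup (Fin d) (ZMod p)) : Matrix (Fin d) (Fin d) (ZMod p))
      = 1 + single a b (n : ZMod p) := by
  induction n with
  | zero => simp
  | succ n ih =>
    rw [pow_succ, Matrix.SpecialLinearGroup.coe_mul, ih, h]
    have hz : single a b ((n:ZMod p)) * single a b 1 = 0 :=
      Matrix.single_mul_single_of_ne _ _ _ _ hba _
    have hexp : (1 + single a b ((n:ZMod p))) * (1 + single a b (1:ZMod p))
        = 1 + single a b ((n:ZMod p)) + single a b 1
          + single a b ((n:ZMod p)) * single a b 1 := by noncomm_ring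
    rw [hexp, hz, add_zero, add_assoc, ← Matrix.single_add]
    push_cast
    ring_nf

theorem single_to_Full (hd : 5 ≤ d) (a b : Fin d) (hba : b ≠ a)
    (T : SpecialLinearGroup (Fin d) (ZMod p)) (hT : T ∈ HH p d hd)
    (h : (T : Matrix (Fin d) (Fin d) (ZMod p)) = 1 + single a b 1) :
    Full p d hd a b := by
  haveI : NeZero p := ⟨(Fact.out : p.Prime).ne_zero⟩
  intro lam
  refine ⟨T ^ lam.val, pow_mem hT _, ?_⟩
  rw [pow_val a b hba T h lam.val]
  congr 1
  congr 1
  rw [ZMod.natCast_val, ZMod.cast_id]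

theorem Full_shift_down (hd : 5 ≤ d) (a b : Fin d) (h : Full p d hd (a+1) (b+1)) :
    Full p d hd a b := by
  intro lam
  obtain ⟨T, hT, hTv⟩ := h (eps p d a * eps p d b * lam)
  refine ⟨Del p d hd * T * (Del p d hd)⁻¹,
    mul_mem (mul_mem (Del_mem hd) hT) (inv_mem (Del_mem hd)), ?_⟩
  rw [Matrix.SpecialLinearGroup.coe_mul, Matrix.SpecialLinearGroup.coe_mul, hTv]
  have hDel : ((Del p d hd : SpecialLinearGroup (Fin d) (ZMod p)) :
      Matrix (Fin d) (Fin d) (ZMod p)) = AlbertThompsonD p d := rfl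
  have key : (1 + single a b lam) * AlbertThompsonD p d
      = AlbertThompsonD p d * (1 + single (a+1) (b+1) (eps p d a * eps p d b * lam)) := by
    rw [mul_add, add_mul, mul_one, one_mul, Eshift_core hd a b lam]
  calc (Del p d hd : Matrix (Fin d) (Fin d) (ZMod p))
        * (1 + single (a+1) (b+1) (eps p d a * eps p d b * lam))
        * ((Del p d hd)⁻¹ : SpecialLinearGroup (Fin d) (ZMod p) )
      = (1 + single a b lam) * AlbertThompsonD p d
        * ((Del p d hd)⁻¹ : SpecialLinearGroup (Fin d) (ZMod p)) := by rw [hDel, ← key]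
    _ = (1 + single a b lam)
        * ((Del p d hd * (Del p d hd)⁻¹ : SpecialLinearGroup (Fin d) (ZMod p)) :
            Matrix (Fin d) (Fin d) (ZMod p)) := by
        rw [Matrix.SpecialLinearGroup.coe_mul, hDel, mul_assoc]
    _ = 1 + single a b lam := by rw [mul_inv_cancel]; simp

theorem Full_shift_nat (hd : 5 ≤ d) (a b : Fin d) (h : Full p d hd a b) (k : ℕ) :
    Full p d hd (a - (k : Fin d)) (b - (k : Fin d)) := by
  induction k with
  | zero => simpa using h
  | succ k ih =>
    have e : ∀ x : Fin d, x - (((k+1:ℕ)) : Fin d) + 1 = x - ((k:ℕ) : Fin d) := by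
      intro x; push_cast; abel
    apply Full_shift_down hd
    rw [e a, e b]
    exact ih

theorem Full_shift (hd : 5 ≤ d) (a b : Fin d) (h : Full p d hd a b) (t : Fin d) :
    Full p d hd (a - t) (b - t) := by
  have := Full_shift_nat hd a b h t.val
  rwa [Fin.cast_val_eq_self] at this

theorem Full_add (hd : 5 ≤ d) (a b c : Fin d) (hab : a ≠ b) (hbc : b ≠ c) (hac : a ≠ c)
    (h1 : Full p d hd a b) (h2 : Full p d hd b c) : Full p d hd a c := by
  intro lam
  obtain ⟨T₁, hT₁, e₁⟩ := h1 lam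
  obtain ⟨T₂, hT₂, e₂⟩ := h2 1
  have hN : single a b lam * single a b lam = 0 :=
    Matrix.single_mul_single_of_ne _ _ _ _ hab.symm _
  have hM : single b c (1:ZMod p) * single b c 1 = 0 :=
    Matrix.single_mul_single_of_ne _ _ _ _ hbc.symm _
  have hMN : single b c (1:ZMod p) * single a b lam = 0 :=
    Matrix.single_mul_single_of_ne _ _ _ _ hac.symm _
  obtain ⟨T, hT, hTv⟩ := comm_mem hd hT₁ hT₂ e₁ e₂ hN hM hMN
  refine ⟨T, hT, ?_⟩
  rw [hTv, Matrix.single_mul_single_same, mul_one]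

/-! ### Offsets -/

def FullOff (p d : ℕ) [Fact p.Prime] [NeZero d] (hd : 5 ≤ d) (r : Fin d) : Prop :=
  ∀ i : Fin d, Full p d hd i (i + r)

theorem Full_to_FullOff (hd : 5 ≤ d) (a b : Fin d) (h : Full p d hd a b) :
    FullOff p d hd (b - a) := by
  intro i
  have h2 := Full_shift hd a b h (a - i)
  rw [sub_sub_cancel] at h2
  have e : b - (a - i) = i + (b - a) := by abel
  rwa [e] at h2

theorem FullOff_add (hd : 5 ≤ d) (r s : Fin d) (hr : r ≠ 0) (hs : s ≠ 0) (hrs : r + s ≠ 0)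
    (h1 : FullOff p d hd r) (h2 : FullOff p d hd s) : FullOff p d hd (r + s) := by
  intro i
  have hab : i ≠ i + r := fun h => hr (left_eq_add.mp h)
  have hbc : i + r ≠ i + r + s := fun h => hs (left_eq_add.mp h)
  have hac : i ≠ i + (r + s) := fun h => hrs (left_eq_add.mp h)
  have := Full_add hd i (i+r) (i+r+s) hab hbc (by rw [add_assoc]; exact hac) (h1 i) (h2 (i+r))
  rwa [add_assoc] at this

/-! ### The concrete computations producing the first transvections -/

theorem Cel_coe (hd : 5 ≤ d) :
    ((Cel p d hd : SpecialLinearGroup (Fin d) (ZMod p)) : Matrix (Fin d) (Fin d) (ZMod p))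
    = 1 + (single ((d-2:ℕ) : Fin d) ((1:ℕ) : Fin d) 1
        + single ((d-1:ℕ) : Fin d) ((0:ℕ) : Fin d) 1) := by
  show AlbertThompsonC p d = _
  unfold AlbertThompsonC
  rw [add_assoc]

theorem C1_coe (hd : 5 ≤ d) :
    (((Del p d hd)⁻¹ * Cel p d hd * Del p d hd : SpecialLinearGroup (Fin d) (ZMod p)) :
        Matrix (Fin d) (Fin d) (ZMod p))
    = 1 + (single ((d-1:ℕ) : Fin d) (2 : Fin d) (-1)
        + single (0 : Fin d) (1 : Fin d) 1) := by
  have c0 : ((0:ℕ) : Fin d) = (0 : Fin d) := by norm_cast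
  have c1 : ((1:ℕ) : Fin d) = (1 : Fin d) := by norm_cast
  have e1 : ((d-2:ℕ) : Fin d) + 1 = ((d-1:ℕ) : Fin d) := by
    rw [show (1 : Fin d) = ((1:ℕ) : Fin d) from c1.symm]
    exact castAdd (by rw [show d-2+1 = d-1 by omega])
  have e2 : ((d-1:ℕ) : Fin d) + 1 = (0 : Fin d) := by
    rw [show (1 : Fin d) = ((1:ℕ) : Fin d) from c1.symm, ← c0]
    exact castAdd (by rw [show d-1+1 = d by omega, Nat.mod_self, Nat.zero_mod])
  have eps1 : eps p d ((1:ℕ) : Fin d) = -1 := by rw [c1]; exact if_pos rfl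
  have eps0 : eps p d ((0:ℕ) : Fin d) = 1 := by
    rw [c0]; exact if_neg (by
      intro h; have := congrArg Fin.val h
      rw [Fin.val_zero, val_one' hd] at this; omega)
  have epsr1 : eps p d ((d-2:ℕ) : Fin d) = 1 := by
    refine if_neg ?_
    rw [show (1:Fin d) = ((1:ℕ):Fin d) from c1.symm]
    exact castNe (by omega) (by omega) (by omega)
  have epsr2 : eps p d ((d-1:ℕ) : Fin d) = 1 := by
    refine if_neg ?_
    rw [show (1:Fin d) = ((1:ℕ):Fin d) from c1.symm]
    exact castNe (by omega) (by omega) (by omega)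
  -- C * D = D * X
  have key : AlbertThompsonC p d * AlbertThompsonD p d
      = AlbertThompsonD p d * (1 + (single ((d-1:ℕ) : Fin d) (2 : Fin d) (-1)
          + single (0 : Fin d) (1 : Fin d) 1)) := by
    have s1 := Eshift_core (p := p) hd ((d-2:ℕ) : Fin d) ((1:ℕ) : Fin d) 1
    have s2 := Eshift_core (p := p) hd ((d-1:ℕ) : Fin d) ((0:ℕ) : Fin d) 1
    rw [e1] at s1
    rw [e2] at s2
    rw [epsr1, eps1] at s1
    rw [epsr2, eps0] at s2
    rw [show ((1:ZMod p) * (-1) * 1 : ZMod p) = -1 by ring] at s1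
    rw [show ((1:ZMod p) * 1 * 1 : ZMod p) = 1 by ring] at s2
    unfold AlbertThompsonC
    rw [c1] at s1 ⊢
    rw [c0] at s2 ⊢
    rw [one_add_one_eq_two] at s1
    rw [zero_add] at s2
    rw [add_mul, add_mul, one_mul, s1, s2]
    rw [mul_add, mul_one, mul_add]
    abel
  have hDel : ((Del p d hd : SpecialLinearGroup (Fin d) (ZMod p)) :
      Matrix (Fin d) (Fin d) (ZMod p)) = AlbertThompsonD p d := rfl
  have hCel : ((Cel p d hd : SpecialLinearGroup (Fin d) (ZMod p)) :
      Matrix (Fin d) (Fin d) (ZMod p)) = AlbertThompsonC p d := rfl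
  rw [Matrix.SpecialLinearGroup.coe_mul, Matrix.SpecialLinearGroup.coe_mul, hDel, hCel]
  calc (((Del p d hd)⁻¹ : SpecialLinearGroup (Fin d) (ZMod p)) :
        Matrix (Fin d) (Fin d) (ZMod p)) * AlbertThompsonC p d * AlbertThompsonD p d
      = (((Del p d hd)⁻¹ : SpecialLinearGroup (Fin d) (ZMod p)) :
        Matrix (Fin d) (Fin d) (ZMod p)) * (AlbertThompsonC p d * AlbertThompsonD p d) := by
        rw [mul_assoc]
    _ = (((Del p d hd)⁻¹ : SpecialLinearGroup (Fin d) (ZMod p)) :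
        Matrix (Fin d) (Fin d) (ZMod p)) * AlbertThompsonD p d
        * (1 + (single ((d-1:ℕ) : Fin d) (2 : Fin d) (-1)
          + single (0 : Fin d) (1 : Fin d) 1)) := by rw [key, mul_assoc]
    _ = (((Del p d hd)⁻¹ * Del p d hd : SpecialLinearGroup (Fin d) (ZMod p)) :
        Matrix (Fin d) (Fin d) (ZMod p))
        * (1 + (single ((d-1:ℕ) : Fin d) (2 : Fin d) (-1)
          + single (0 : Fin d) (1 : Fin d) 1)) := by
        rw [Matrix.SpecialLinearGroup.coe_mul, hDel]
    _ = 1 + (single ((d-1:ℕ) : Fin d) (2 : Fin d) (-1)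
          + single (0 : Fin d) (1 : Fin d) 1) := by
        rw [inv_mul_cancel]; simp


/-! ### The first single transvection and offset bases -/

theorem Cel_coe' (hd : 5 ≤ d) :
    ((Cel p d hd : SpecialLinearGroup (Fin d) (ZMod p)) : Matrix (Fin d) (Fin d) (ZMod p))
    = 1 + (single ((d-2:ℕ) : Fin d) (1 : Fin d) 1
        + single ((d-1:ℕ) : Fin d) (0 : Fin d) 1) := by
  have c0 : ((0:ℕ) : Fin d) = (0 : Fin d) := by norm_cast
  have c1 : ((1:ℕ) : Fin d) = (1 : Fin d) := by norm_cast
  rw [Cel_coe hd, c0, c1]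

theorem CelN_sq (hd : 5 ≤ d) :
    (single ((d-2:ℕ) : Fin d) (1 : Fin d) (1:ZMod p)
      + single ((d-1:ℕ) : Fin d) (0 : Fin d) 1)
    * (single ((d-2:ℕ) : Fin d) (1 : Fin d) 1
      + single ((d-1:ℕ) : Fin d) (0 : Fin d) 1) = 0 := by
  have c0 : ((0:ℕ) : Fin d) = (0 : Fin d) := by norm_cast
  have c1 : ((1:ℕ) : Fin d) = (1 : Fin d) := by norm_cast
  have n1 : (1 : Fin d) ≠ ((d-2:ℕ) : Fin d) := by
    rw [← c1]; exact castNe (by omega) (by omega) (by omega)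
  have n2 : (1 : Fin d) ≠ ((d-1:ℕ) : Fin d) := by
    rw [← c1]; exact castNe (by omega) (by omega) (by omega)
  have n3 : (0 : Fin d) ≠ ((d-2:ℕ) : Fin d) := by
    rw [← c0]; exact castNe (by omega) (by omega) (by omega)
  have n4 : (0 : Fin d) ≠ ((d-1:ℕ) : Fin d) := by
    rw [← c0]; exact castNe (by omega) (by omega) (by omega)
  rw [add_mul, mul_add, mul_add,
    Matrix.single_mul_single_of_ne _ _ _ _ n1, Matrix.single_mul_single_of_ne _ _ _ _ n2,
    Matrix.single_mul_single_of_ne _ _ _ _ n3, Matrix.single_mul_single_of_ne _ _ _ _ n4]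
  simp

theorem Full_r2_1 (hd : 5 ≤ d) : Full p d hd ((d-1:ℕ) : Fin d) (1 : Fin d) := by
  have c0 : ((0:ℕ) : Fin d) = (0 : Fin d) := by norm_cast
  have c1 : ((1:ℕ) : Fin d) = (1 : Fin d) := by norm_cast
  have c2 : ((2:ℕ) : Fin d) = (2 : Fin d) := by norm_cast
  have n_1_d2 : (1 : Fin d) ≠ ((d-2:ℕ) : Fin d) := by
    rw [← c1]; exact castNe (by omega) (by omega) (by omega)
  have n_1_d1 : (1 : Fin d) ≠ ((d-1:ℕ) : Fin d) := by
    rw [← c1]; exact castNe (by omega) (by omega) (by omega)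
  have n_1_0 : (1 : Fin d) ≠ (0 : Fin d) := by
    rw [← c1, ← c0]; exact castNe (by omega) (by omega) (by omega)
  have n_0_d1 : (0 : Fin d) ≠ ((d-1:ℕ) : Fin d) := by
    rw [← c0]; exact castNe (by omega) (by omega) (by omega)
  have n_2_d2 : (2 : Fin d) ≠ ((d-2:ℕ) : Fin d) := by
    rw [← c2]; exact castNe (by omega) (by omega) (by omega)
  have n_2_d1 : (2 : Fin d) ≠ ((d-1:ℕ) : Fin d) := by
    rw [← c2]; exact castNe (by omega) (by omega) (by omega)
  have n_2_0 : (2 : Fin d) ≠ (0 : Fin d) := by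
    rw [← c2, ← c0]; exact castNe (by omega) (by omega) (by omega)
  have hC1mem : (Del p d hd)⁻¹ * Cel p d hd * Del p d hd ∈ HH p d hd :=
    mul_mem (mul_mem (inv_mem (Del_mem hd)) (Cel_mem hd)) (Del_mem hd)
  have hM : (single ((d-1:ℕ) : Fin d) (2 : Fin d) (-1:ZMod p)
      + single (0 : Fin d) (1 : Fin d) 1)
      * (single ((d-1:ℕ) : Fin d) (2 : Fin d) (-1)
      + single (0 : Fin d) (1 : Fin d) 1) = 0 := by
    rw [add_mul, mul_add, mul_add,
      Matrix.single_mul_single_of_ne _ _ _ _ n_2_d1, Matrix.single_mul_single_of_ne _ _ _ _ n_2_0,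
      Matrix.single_mul_single_of_ne _ _ _ _ n_1_d1, Matrix.single_mul_single_of_ne _ _ _ _ n_1_0]
    simp
  have hMN : (single ((d-1:ℕ) : Fin d) (2 : Fin d) (-1:ZMod p)
      + single (0 : Fin d) (1 : Fin d) 1)
      * (single ((d-2:ℕ) : Fin d) (1 : Fin d) 1
      + single ((d-1:ℕ) : Fin d) (0 : Fin d) 1) = 0 := by
    rw [add_mul, mul_add, mul_add,
      Matrix.single_mul_single_of_ne _ _ _ _ n_2_d2, Matrix.single_mul_single_of_ne _ _ _ _ n_2_d1,
      Matrix.single_mul_single_of_ne _ _ _ _ n_1_d2, Matrix.single_mul_single_of_ne _ _ _ _ n_1_d1]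
    simp
  have hNM : (single ((d-2:ℕ) : Fin d) (1 : Fin d) (1:ZMod p)
      + single ((d-1:ℕ) : Fin d) (0 : Fin d) 1)
      * (single ((d-1:ℕ) : Fin d) (2 : Fin d) (-1)
      + single (0 : Fin d) (1 : Fin d) 1)
      = single ((d-1:ℕ) : Fin d) (1 : Fin d) 1 := by
    rw [add_mul, mul_add, mul_add,
      Matrix.single_mul_single_of_ne _ _ _ _ n_1_d1, Matrix.single_mul_single_of_ne _ _ _ _ n_1_0,
      Matrix.single_mul_single_of_ne _ _ _ _ n_0_d1, Matrix.single_mul_single_same]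
    simp
  obtain ⟨T, hT, hTv⟩ := comm_mem hd (Cel_mem hd) hC1mem (Cel_coe' hd) (C1_coe hd)
    (CelN_sq hd) hM hMN
  apply single_to_Full hd _ _ n_1_d1 T hT
  rw [hTv, hNM]

theorem base2 (hd : 5 ≤ d) : FullOff p d hd ((2:ℕ) : Fin d) := by
  have c1 : ((1:ℕ) : Fin d) = (1 : Fin d) := by norm_cast
  have h := Full_to_FullOff (p := p) hd _ _ (Full_r2_1 hd)
  have e : (1 : Fin d) - ((d-1:ℕ):Fin d) = ((2:ℕ) : Fin d) := by
    rw [sub_eq_iff_eq_add, castAdd (x := 2) (y := d-1) (z := 1)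
      (by rw [show 2+(d-1) = d+1 by omega, Nat.add_mod_left]), c1]
  rwa [e] at h

theorem Full_d3_0 (hd : 5 ≤ d) : Full p d hd ((d-3:ℕ):Fin d) (0 : Fin d) := by
  have c0 : ((0:ℕ) : Fin d) = (0 : Fin d) := by norm_cast
  have c1 : ((1:ℕ) : Fin d) = (1 : Fin d) := by norm_cast
  have c2 : ((2:ℕ) : Fin d) = (2 : Fin d) := by norm_cast
  have n_d1_d3 : ((d-1:ℕ) : Fin d) ≠ ((d-3:ℕ) : Fin d) :=
    castNe (by omega) (by omega) (by omega)
  have n_d1_d2 : ((d-1:ℕ) : Fin d) ≠ ((d-2:ℕ) : Fin d) :=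
    castNe (by omega) (by omega) (by omega)
  have n_1_d3 : (1 : Fin d) ≠ ((d-3:ℕ) : Fin d) := by
    rw [← c1]; exact castNe (by omega) (by omega) (by omega)
  have n_0_d3 : (0 : Fin d) ≠ ((d-3:ℕ) : Fin d) := by
    rw [← c0]; exact castNe (by omega) (by omega) (by omega)
  intro lam
  have hbase := base2 (p := p) hd ((d-3:ℕ) : Fin d)
  have e : ((d-3:ℕ) : Fin d) + ((2:ℕ) : Fin d) = ((d-1:ℕ) : Fin d) :=
    castAdd (by rw [show d-3+2 = d-1 by omega])
  rw [e] at hbase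
  obtain ⟨T₁, hT₁, e₁⟩ := hbase lam
  have hN : single ((d-3:ℕ):Fin d) ((d-1:ℕ):Fin d) lam
      * single ((d-3:ℕ):Fin d) ((d-1:ℕ):Fin d) lam = 0 :=
    Matrix.single_mul_single_of_ne _ _ _ _ n_d1_d3 _
  have hMN : (single ((d-2:ℕ) : Fin d) (1 : Fin d) (1:ZMod p)
      + single ((d-1:ℕ) : Fin d) (0 : Fin d) 1)
      * single ((d-3:ℕ):Fin d) ((d-1:ℕ):Fin d) lam = 0 := by
    rw [add_mul, Matrix.single_mul_single_of_ne _ _ _ _ n_1_d3,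
      Matrix.single_mul_single_of_ne _ _ _ _ n_0_d3]
    simp
  have hNM : single ((d-3:ℕ):Fin d) ((d-1:ℕ):Fin d) lam
      * (single ((d-2:ℕ) : Fin d) (1 : Fin d) 1
      + single ((d-1:ℕ) : Fin d) (0 : Fin d) 1)
      = single ((d-3:ℕ):Fin d) (0 : Fin d) lam := by
    rw [mul_add, Matrix.single_mul_single_of_ne _ _ _ _ n_d1_d2,
      Matrix.single_mul_single_same]
    simp
  obtain ⟨T, hT, hTv⟩ := comm_mem hd hT₁ (Cel_mem hd) e₁ (Cel_coe' hd) hN (CelN_sq hd) hMN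
  exact ⟨T, hT, by rw [hTv, hNM]⟩

theorem base3 (hd : 5 ≤ d) : FullOff p d hd ((3:ℕ) : Fin d) := by
  have c0 : ((0:ℕ) : Fin d) = (0 : Fin d) := by norm_cast
  have h := Full_to_FullOff (p := p) hd _ _ (Full_d3_0 hd)
  have e : (0 : Fin d) - ((d-3:ℕ):Fin d) = ((3:ℕ) : Fin d) := by
    rw [sub_eq_iff_eq_add, castAdd (x := 3) (y := d-3) (z := 0)
      (by rw [show 3+(d-3) = d by omega, Nat.mod_self, Nat.zero_mod]), c0]
  rwa [e] at h

theorem offall (hd : 5 ≤ d) : ∀ r : ℕ, 2 ≤ r → r ≤ d-1 → FullOff p d hd ((r:ℕ) : Fin d) := by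
  intro r
  induction r using Nat.strong_induction_on with
  | _ r ih =>
    intro h2 hle
    by_cases hr2 : r = 2
    · subst hr2; exact base2 hd
    by_cases hr3 : r = 3
    · subst hr3; exact base3 hd
    have h4 : 4 ≤ r := by omega
    have hsum : ((r-2:ℕ) : Fin d) + ((2:ℕ) : Fin d) = ((r:ℕ) : Fin d) :=
      castAdd (by rw [show r-2+2 = r by omega])
    have := FullOff_add hd _ _ (castNeZero (by omega) (by omega))
      (castNeZero (by omega) (by omega))
      (by rw [hsum]; exact castNeZero (by omega) (by omega))
      (ih (r-2) (by omega) (by omega) (by omega)) (base2 hd)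
    rwa [hsum] at this

theorem off1 (hd : 5 ≤ d) : FullOff p d hd ((1:ℕ) : Fin d) := by
  have hsum : ((d-2:ℕ) : Fin d) + ((3:ℕ) : Fin d) = ((1:ℕ) : Fin d) :=
    castAdd (by rw [show d-2+3 = d+1 by omega, Nat.add_mod_left])
  have := FullOff_add (p := p) hd _ _ (castNeZero (by omega) (by omega))
    (castNeZero (by omega) (by omega))
    (by rw [hsum]; exact castNeZero (by omega) (by omega))
    (offall hd (d-2) (by omega) (by omega)) (base3 hd)
  rwa [hsum] at this

theorem all_Full (hd : 5 ≤ d) (a b : Fin d) (hab : a ≠ b) : Full p d hd a b := by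
  have hr : b - a ≠ 0 := sub_ne_zero.mpr (Ne.symm hab)
  have hv1 : 1 ≤ (b-a).val := by
    rcases Nat.eq_zero_or_pos (b-a).val with h | h
    · exact absurd (Fin.ext (by rw [h, Fin.val_zero]) : b - a = 0) hr
    · omega
  have hvd : (b-a).val ≤ d - 1 := by have := (b-a).isLt; omega
  have hoff : FullOff p d hd (((b-a).val : ℕ) : Fin d) := by
    by_cases h1 : (b-a).val = 1
    · rw [h1]; exact off1 hd
    · exact offall hd (b-a).val (by omega) hvd
  rw [Fin.cast_val_eq_self] at hoff
  have := hoff a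
  rwa [show a + (b - a) = b by abel] at this


/-! ### Transvections -/

theorem transvec_mem (hd : 5 ≤ d) (a b : Fin d) (hab : a ≠ b) (lam : ZMod p) :
    ∃ T ∈ HH p d hd,
      (T : Matrix (Fin d) (Fin d) (ZMod p)) = Matrix.transvection a b lam := by
  obtain ⟨T, hT, hv⟩ := all_Full hd a b hab lam
  exact ⟨T, hT, by rw [hv]; rfl⟩

/-! ### Diagonal matrices of determinant one -/

theorem Gmat (i j : Fin d) (hij : i ≠ j) (b : ZMod p) (hb : b ≠ 0) :
    (1 + single i j b) * (1 + single j i (-b⁻¹)) * (1 + single i j b)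
      * (1 + single i j (-1)) * (1 + single j i 1)
      * (1 + single i j (-1))
    = 1 + single i i (b-1) + single j j (b⁻¹-1) := by
  have Ec : ∀ (x y : Fin d) (c : ZMod p),
      single x y c = c • single x y 1 := by
    intro x y c; rw [smul_single, smul_eq_mul, mul_one]
  have PP : single i j (1:ZMod p) * single i j 1 = 0 :=
    Matrix.single_mul_single_of_ne _ _ _ _ hij.symm _
  have QQ : single j i (1:ZMod p) * single j i 1 = 0 :=
    Matrix.single_mul_single_of_ne _ _ _ _ hij _
  have PQ : single i j (1:ZMod p) * single j i 1
      = single i i 1 := by rw [Matrix.single_mul_single_same, mul_one]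
  have QP : single j i (1:ZMod p) * single i j 1
      = single j j 1 := by rw [Matrix.single_mul_single_same, mul_one]
  have iiP : single i i (1:ZMod p) * single i j 1
      = single i j 1 := by rw [Matrix.single_mul_single_same, mul_one]
  have jjQ : single j j (1:ZMod p) * single j i 1
      = single j i 1 := by rw [Matrix.single_mul_single_same, mul_one]
  have iiQ : single i i (1:ZMod p) * single j i 1 = 0 :=
    Matrix.single_mul_single_of_ne _ _ _ _ hij _
  have jjP : single j j (1:ZMod p) * single i j 1 = 0 :=
    Matrix.single_mul_single_of_ne _ _ _ _ hij.symm _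
  have iiii : single i i (1:ZMod p) * single i i 1
      = single i i 1 := by rw [Matrix.single_mul_single_same, mul_one]
  have jjjj : single j j (1:ZMod p) * single j j 1
      = single j j 1 := by rw [Matrix.single_mul_single_same, mul_one]
  have iijj : single i i (1:ZMod p) * single j j 1 = 0 :=
    Matrix.single_mul_single_of_ne _ _ _ _ hij _
  have jjii : single j j (1:ZMod p) * single i i 1 = 0 :=
    Matrix.single_mul_single_of_ne _ _ _ _ hij.symm _
  have Pii : single i j (1:ZMod p) * single i i 1 = 0 :=
    Matrix.single_mul_single_of_ne _ _ _ _ hij.symm _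
  have Pjj : single i j (1:ZMod p) * single j j 1
      = single i j 1 := by rw [Matrix.single_mul_single_same, mul_one]
  have Qii : single j i (1:ZMod p) * single i i 1
      = single j i 1 := by rw [Matrix.single_mul_single_same, mul_one]
  have Qjj : single j i (1:ZMod p) * single j j 1 = 0 :=
    Matrix.single_mul_single_of_ne _ _ _ _ hij _
  rw [Ec i j b, Ec j i (-b⁻¹), Ec i j (-1), Ec j i (1:ZMod p), Ec i i (b-1), Ec j j (b⁻¹-1)]
  simp only [mul_add, add_mul, mul_one, one_mul, smul_mul_assoc, mul_smul_comm, smul_smul,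
    PP, QQ, PQ, QP, iiP, jjQ, iiQ, jjP, iiii, jjjj, iijj, jjii, Pii, Pjj, Qii, Qjj,
    smul_zero, add_zero, zero_add]
  match_scalars <;> field_simp <;> ring

theorem diag_two (hd : 5 ≤ d) (i j : Fin d) (hij : i ≠ j) (a : ZMod p) (ha : a ≠ 0) :
    ∃ T ∈ HH p d hd, (T : Matrix (Fin d) (Fin d) (ZMod p))
      = Matrix.diagonal (fun k => if k = i then a else if k = j then a⁻¹ else 1) := by
  obtain ⟨T₁, h₁, e₁⟩ := all_Full hd i j hij a
  obtain ⟨T₂, h₂, e₂⟩ := all_Full hd j i hij.symm (-a⁻¹)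
  obtain ⟨T₃, h₃, e₃⟩ := all_Full hd i j hij a
  obtain ⟨T₄, h₄, e₄⟩ := all_Full hd i j hij (-1 : ZMod p)
  obtain ⟨T₅, h₅, e₅⟩ := all_Full hd j i hij.symm (1 : ZMod p)
  obtain ⟨T₆, h₆, e₆⟩ := all_Full hd i j hij (-1 : ZMod p)
  refine ⟨T₁*T₂*T₃*T₄*T₅*T₆,
    mul_mem (mul_mem (mul_mem (mul_mem (mul_mem h₁ h₂) h₃) h₄) h₅) h₆, ?_⟩
  rw [Matrix.SpecialLinearGroup.coe_mul, Matrix.SpecialLinearGroup.coe_mul,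
    Matrix.SpecialLinearGroup.coe_mul, Matrix.SpecialLinearGroup.coe_mul,
    Matrix.SpecialLinearGroup.coe_mul, e₁, e₂, e₃, e₄, e₅, e₆, Gmat i j hij a ha]
  clear e₁ e₂ e₃ e₄ e₅ e₆ h₁ h₂ h₃ h₄ h₅ h₆ T₁ T₂ T₃ T₄ T₅ T₆
  ext k l
  rw [Matrix.add_apply, Matrix.add_apply, Matrix.one_apply, std_apply, std_apply,
    Matrix.diagonal_apply]
  by_cases hkl : k = l
  · subst hkl
    by_cases hki : k = i
    · obtain rfl := hki
      rw [if_pos rfl, if_pos ⟨rfl, rfl⟩, if_neg (fun h : j = k ∧ j = k => hij h.1.symm),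
        if_pos rfl]
      simp only [if_true]
      ring
    · by_cases hkj : k = j
      · obtain rfl := hkj
        rw [if_pos rfl, if_neg (fun h : i = k ∧ i = k => hki h.1.symm), if_pos ⟨rfl, rfl⟩,
          if_neg hki, if_pos rfl]
        simp only [if_true]
        ring
      · rw [if_pos rfl, if_neg (fun h : i = k ∧ i = k => hki h.1.symm),
          if_neg (fun h : j = k ∧ j = k => hkj h.1.symm), if_neg hki, if_neg hkj]
        simp only [if_true]
        ring
  · simp only [if_neg hkl, if_neg (fun h : i = k ∧ i = l => hkl (h.1.symm.trans h.2)),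
      if_neg (fun h : j = k ∧ j = l => hkl (h.1.symm.trans h.2))]
    ring

theorem diag_one_case (hd : 5 ≤ d) (v : Fin d → ZMod p) (h : ∀ k, v k = 1) :
    ∃ T ∈ HH p d hd, (T : Matrix (Fin d) (Fin d) (ZMod p)) = Matrix.diagonal v := by
  refine ⟨1, one_mem _, ?_⟩
  have : v = fun _ => 1 := funext h
  rw [this, Matrix.diagonal_one]
  rfl

theorem diag_mem_aux (hd : 5 ≤ d) : ∀ (n : ℕ) (v : Fin d → ZMod p), (∏ k, v k) = 1 →
    (Finset.univ.filter (fun k => v k ≠ 1)).card ≤ n →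
    ∃ T ∈ HH p d hd, (T : Matrix (Fin d) (Fin d) (ZMod p)) = Matrix.diagonal v := by
  intro n
  induction n with
  | zero =>
    intro v hv hc
    apply diag_one_case hd
    intro k; by_contra hk
    have hmem : k ∈ Finset.univ.filter (fun k => v k ≠ 1) := by
      simp only [Finset.mem_filter, Finset.mem_univ, true_and]; exact hk
    have := Finset.card_pos.mpr ⟨k, hmem⟩
    omega
  | succ n ih =>
    intro v hv hc
    by_cases hall : ∀ k, v k = 1
    · exact diag_one_case hd v hall
    push_neg at hall
    obtain ⟨i, hi⟩ := hall
    have hj : ∃ j, j ≠ i ∧ v j ≠ 1 := by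
      by_contra h
      push_neg at h
      have : (∏ k, v k) = v i :=
        Finset.prod_eq_single i (fun b _ hb => h b hb) (by simp)
      rw [hv] at this
      exact hi this.symm
    obtain ⟨j, hji, hj1⟩ := hj
    have hij : i ≠ j := hji.symm
    have hvi0 : v i ≠ 0 := by
      intro h0
      have : (∏ k, v k) = 0 := Finset.prod_eq_zero (Finset.mem_univ i) h0
      rw [hv] at this
      exact one_ne_zero this
    set v' := Function.update (Function.update v i 1) j (v j * v i) with hv'def
    have vii : v' i = 1 := by
      rw [hv'def, Function.update_of_ne hij, Function.update_self]
    have vjj : v' j = v j * v i := by rw [hv'def, Function.update_self]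
    have vkk : ∀ k, k ≠ i → k ≠ j → v' k = v k := by
      intro k hki hkj
      rw [hv'def, Function.update_of_ne hkj, Function.update_of_ne hki]
    have e1 := Finset.mul_prod_erase Finset.univ v' (Finset.mem_univ j)
    have e2 := Finset.mul_prod_erase (Finset.univ.erase j) v'
      (Finset.mem_erase.mpr ⟨hij, Finset.mem_univ i⟩)
    have e3 := Finset.mul_prod_erase Finset.univ v (Finset.mem_univ j)
    have e4 := Finset.mul_prod_erase (Finset.univ.erase j) v
      (Finset.mem_erase.mpr ⟨hij, Finset.mem_univ i⟩)
    have same : (∏ k ∈ (Finset.univ.erase j).erase i, v' k)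
        = ∏ k ∈ (Finset.univ.erase j).erase i, v k := by
      apply Finset.prod_congr rfl
      intro k hk
      simp only [Finset.mem_erase] at hk
      exact vkk k hk.1 hk.2.1
    have hv'prod : (∏ k, v' k) = 1 := by
      rw [← e1, ← e2, same, vii, vjj]
      rw [← e3, ← e4] at hv
      rw [show v j * v i * (1 * ∏ k ∈ (Finset.univ.erase j).erase i, v k)
            = v j * (v i * ∏ k ∈ (Finset.univ.erase j).erase i, v k) by ring]
      exact hv
    have hsub : (Finset.univ.filter (fun k => v' k ≠ 1))
        ⊆ (Finset.univ.filter (fun k => v k ≠ 1)).erase i := by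
      intro k hk
      simp only [Finset.mem_filter, Finset.mem_univ, true_and] at hk
      have hki : k ≠ i := by
        intro h; subst h; exact hk vii
      simp only [Finset.mem_erase, Finset.mem_filter, Finset.mem_univ, true_and]
      refine ⟨hki, ?_⟩
      by_cases hkj : k = j
      · subst hkj; exact hj1
      · rw [← vkk k hki hkj]; exact hk
    have himem : i ∈ Finset.univ.filter (fun k => v k ≠ 1) := by
      simp only [Finset.mem_filter, Finset.mem_univ, true_and]; exact hi
    have hcard : (Finset.univ.filter (fun k => v' k ≠ 1)).card ≤ n := by
      have h1 := Finset.card_le_card hsub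
      rw [Finset.card_erase_of_mem himem] at h1
      omega
    obtain ⟨T', hT', hT'v⟩ := ih v' hv'prod hcard
    obtain ⟨W, hW, hWv⟩ := diag_two hd i j hij (v i) hvi0
    refine ⟨W * T', mul_mem hW hT', ?_⟩
    rw [Matrix.SpecialLinearGroup.coe_mul, hWv, hT'v, Matrix.diagonal_mul_diagonal]
    have hfun : (fun k => (if k = i then v i else if k = j then (v i)⁻¹ else 1) * v' k) = v := by
      funext k
      by_cases hki : k = i
      · rw [if_pos hki, hki, vii, mul_one]
      · by_cases hkj : k = j
        · rw [if_neg hki, if_pos hkj, hkj, vjj,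
            show (v i)⁻¹ * (v j * v i) = v j * (v i * (v i)⁻¹) by ring,
            mul_inv_cancel₀ hvi0, mul_one]
        · rw [if_neg hki, if_neg hkj, vkk k hki hkj, one_mul]
    rw [hfun]

theorem diag_mem (hd : 5 ≤ d) (v : Fin d → ZMod p) (hv : (∏ k, v k) = 1) :
    ∃ T ∈ HH p d hd, (T : Matrix (Fin d) (Fin d) (ZMod p)) = Matrix.diagonal v :=
  diag_mem_aux hd _ v hv le_rfl

theorem listprod_mem (hd : 5 ≤ d) (L : List (TransvectionStruct (Fin d) (ZMod p))) :
    ∃ T ∈ HH p d hd, (T : Matrix (Fin d) (Fin d) (ZMod p))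
      = (L.map TransvectionStruct.toMatrix).prod := by
  induction L with
  | nil => exact ⟨1, one_mem _, by simp⟩
  | cons t L ih =>
    obtain ⟨T, hT, hTv⟩ := ih
    obtain ⟨Tt, hTt, hTtv⟩ := transvec_mem hd t.i t.j t.hij t.c
    refine ⟨Tt * T, mul_mem hTt hT, ?_⟩
    rw [Matrix.SpecialLinearGroup.coe_mul, hTtv, hTv, List.map_cons, List.prod_cons]
    congr 1

end AlbertThompsonAux

theorem albert_thompson_generate_SL (p d : ℕ) [Fact p.Prime] [NeZero d] (hd : 5 ≤ d) :
    ∃ C' D' : Matrix.SpecialLinearGroup (Fin d) (ZMod p),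
      (C' : Matrix (Fin d) (Fin d) (ZMod p)) = AlbertThompsonC p d ∧
      (D' : Matrix (Fin d) (Fin d) (ZMod p)) = AlbertThompsonD p d ∧
      Subgroup.closure ({C', D'} : Set (Matrix.SpecialLinearGroup (Fin d) (ZMod p))) = ⊤ := by
  classical
  refine ⟨AlbertThompsonAux.Cel p d hd, AlbertThompsonAux.Del p d hd, rfl, rfl, ?_⟩
  rw [Subgroup.eq_top_iff']
  intro g
  show g ∈ AlbertThompsonAux.HH p d hd
  obtain ⟨L, L', v, hg⟩ := Matrix.Pivot.exists_list_transvec_mul_diagonal_mul_list_transvec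
    (g : Matrix (Fin d) (Fin d) (ZMod p))
  have hdetg : (g : Matrix (Fin d) (Fin d) (ZMod p)).det = 1 := g.property
  rw [hg, det_mul, det_mul, Matrix.TransvectionStruct.det_toMatrix_prod,
    Matrix.TransvectionStruct.det_toMatrix_prod, one_mul, mul_one, Matrix.det_diagonal] at hdetg
  obtain ⟨TL, hTL, hTLv⟩ := AlbertThompsonAux.listprod_mem (p := p) hd L
  obtain ⟨TD, hTD, hTDv⟩ := AlbertThompsonAux.diag_mem hd v hdetg
  obtain ⟨TL', hTL', hTL'v⟩ := AlbertThompsonAux.listprod_mem (p := p) hd L'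
  have hgeq : g = TL * TD * TL' := by
    apply Subtype.ext
    show (g : Matrix (Fin d) (Fin d) (ZMod p)) = _
    rw [Matrix.SpecialLinearGroup.coe_mul, Matrix.SpecialLinearGroup.coe_mul,
      hTLv, hTDv, hTL'v, hg]
  rw [hgeq]
  exact mul_mem (mul_mem hTL hTD) hTL'
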